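/- For any two-source instance with n_1q̄ > qμ/φ + n_2 + q̄, the interval [t_1(n_2) - 1, t_1(n_2)] contains an integer m̃ with 0 < m̃ < n_1, and the profile with u_1 = m̃, u_2 = n_2 is a Nash equilibrium; consequently, every two-source game admits a pure Nash equilibrium with u_1 > 0 and u_2 = n_2. -/

import Mathlib

lemma frac_le (φ μ q X Y : ℝ) (hφ : 0 < φ) (hμ : 0 < μ)
    (hX : 0 ≤ X) (hY : 0 ≤ Y) (h : (1 - q) * X ≤ q * μ + Y) :
    φ * X / (X + μ) ≤ q * φ + (1 - q) * φ * Y / (Y + μ) := by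
  have hx : 0 < X + μ := by linarith
  have hy : 0 < Y + μ := by linarith
  have hr : q * φ + (1 - q) * φ * Y / (Y + μ)
      = (q * φ * (Y + μ) + (1 - q) * φ * Y) / (Y + μ) := by
    field_simp
  rw [hr, div_le_div_iff₀ hx hy]
  nlinarith [mul_le_mul_of_nonneg_left h (mul_nonneg hφ.le hμ.le)]

lemma frac_ge (φ μ q X Y : ℝ) (hφ : 0 < φ) (hμ : 0 < μ)
    (hX : 0 ≤ X) (hY : 0 ≤ Y) (h : q * μ + Y ≤ (1 - q) * X) :
    q * φ + (1 - q) * φ * Y / (Y + μ) ≤ φ * X / (X + μ) := by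
  have hx : 0 < X + μ := by linarith
  have hy : 0 < Y + μ := by linarith
  have hr : q * φ + (1 - q) * φ * Y / (Y + μ)
      = (q * φ * (Y + μ) + (1 - q) * φ * Y) / (Y + μ) := by
    field_simp
  rw [hr, div_le_div_iff₀ hy hx]
  nlinarith [mul_le_mul_of_nonneg_left h (mul_nonneg hφ.le hμ.le)]



/-- Nash-equilibrium property for the two-source loss network.  Source `s_1` has
`u1` direct users and `v2` users relaying via `s_2`; source `s_2` has `u2` direct
users and `v1` users relaying via `s_1`.  Traffic rates are `T1 = u1 φ + v1 q̄ φ`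
and `T2 = u2 φ + v2 q̄ φ` with `q̄ = 1 - q`.  The four conditions state that no
direct user and no relaying user can strictly decrease its loss rate by switching
its route (target traffic adjusted for the deviating user's own flow). -/
noncomputable def NE2 (φ μ q : ℝ) (u1 v1 u2 v2 : ℕ) : Prop :=
  (0 < u1 →
      φ * ((u1 : ℝ) * φ + (v1 : ℝ) * (1 - q) * φ) /
          ((u1 : ℝ) * φ + (v1 : ℝ) * (1 - q) * φ + μ) ≤
        q * φ + (1 - q) * φ *
            ((u2 : ℝ) * φ + ((v2 : ℝ) + 1) * (1 - q) * φ) /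
          ((u2 : ℝ) * φ + ((v2 : ℝ) + 1) * (1 - q) * φ + μ)) ∧
  (0 < v2 →
      q * φ + (1 - q) * φ *
          ((u2 : ℝ) * φ + (v2 : ℝ) * (1 - q) * φ) /
          ((u2 : ℝ) * φ + (v2 : ℝ) * (1 - q) * φ + μ) ≤
        φ * (((u1 : ℝ) + 1) * φ + (v1 : ℝ) * (1 - q) * φ) /
          (((u1 : ℝ) + 1) * φ + (v1 : ℝ) * (1 - q) * φ + μ)) ∧
  (0 < u2 →
      φ * ((u2 : ℝ) * φ + (v2 : ℝ) * (1 - q) * φ) /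
          ((u2 : ℝ) * φ + (v2 : ℝ) * (1 - q) * φ + μ) ≤
        q * φ + (1 - q) * φ *
            ((u1 : ℝ) * φ + ((v1 : ℝ) + 1) * (1 - q) * φ) /
          ((u1 : ℝ) * φ + ((v1 : ℝ) + 1) * (1 - q) * φ + μ)) ∧
  (0 < v1 →
      q * φ + (1 - q) * φ *
          ((u1 : ℝ) * φ + (v1 : ℝ) * (1 - q) * φ) /
          ((u1 : ℝ) * φ + (v1 : ℝ) * (1 - q) * φ + μ) ≤
        φ * (((u2 : ℝ) + 1) * φ + (v2 : ℝ) * (1 - q) * φ) /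
          (((u2 : ℝ) + 1) * φ + (v2 : ℝ) * (1 - q) * φ + μ))

set_option maxHeartbeats 1000000 in
/-- Existence of a pure Nash equilibrium in the two-source game.  If
`n1 q̄ > qμ/φ + n2 + q̄`, then the interval `[t1(n2) - 1, t1(n2)]` (with
`t1(u2) = (qμ/φ + u2(1+q̄²) + (n1+1)q̄ - n2 q̄²)/(2q̄)`) contains an integer `m̃`
with `0 < m̃ < n1`, and the profile `u1 = m̃`, `u2 = n2` (so `v1 = 0`,
`v2 = n1 - m̃`) is a Nash equilibrium.  Consequently, every two-source game
admits a pure Nash equilibrium with `u1 > 0` and `u2 = n2`. -/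
theorem two_source_NE_exists (φ μ q : ℝ) (hφ : 0 < φ) (hμ : 0 < μ)
    (hq0 : 0 < q) (hq1 : q < 1) (n1 n2 : ℕ) (hn : n2 ≤ n1) (hn2 : 1 ≤ n2)
    (t1 : ℝ)
    (ht1 : t1 = (q * μ / φ + (n2 : ℝ) * (1 + (1 - q) ^ 2) +
        ((n1 : ℝ) + 1) * (1 - q) - (n2 : ℝ) * (1 - q) ^ 2) / (2 * (1 - q))) :
    (((n1 : ℝ) * (1 - q) > q * μ / φ + (n2 : ℝ) + (1 - q)) →
      ∃ mt : ℕ, 0 < mt ∧ mt < n1 ∧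
        t1 - 1 ≤ (mt : ℝ) ∧ (mt : ℝ) ≤ t1 ∧
        NE2 φ μ q mt 0 n2 (n1 - mt)) ∧
    (∃ u1 : ℕ, 0 < u1 ∧ u1 ≤ n1 ∧ NE2 φ μ q u1 0 n2 (n1 - u1)) := by
  have hqb : 0 < 1 - q := by linarith
  have hcφ : q * μ / φ * φ = q * μ := div_mul_cancel₀ _ hφ.ne'
  have hc0 : 0 < q * μ / φ := by positivity
  have hn1 : 1 ≤ n1 := le_trans hn2 hn
  have hn2R : (1 : ℝ) ≤ (n2 : ℝ) := by exact_mod_cast hn2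
  have hn1R : (1 : ℝ) ≤ (n1 : ℝ) := by exact_mod_cast hn1
  have hnR : (n2 : ℝ) ≤ (n1 : ℝ) := by exact_mod_cast hn
  have ht1' : t1 = (q * μ / φ + (n2 : ℝ) + ((n1 : ℝ) + 1) * (1 - q)) / (2 * (1 - q)) := by
    rw [ht1]; ring
  -- key reduction lemma
  have key : ∀ a : ℕ, 0 < a → a ≤ n1 →
      (2 * (1 - q) * (a : ℝ) * φ ≤ q * μ + (n2 : ℝ) * φ + ((n1 : ℝ) + 1) * (1 - q) * φ) →
      (a < n1 → q * μ + (n2 : ℝ) * φ + ((n1 : ℝ) - 1) * (1 - q) * φ ≤ 2 * (1 - q) * (a : ℝ) * φ) →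
      ((1 - q) * ((n2 : ℝ) * φ + ((n1 : ℝ) - (a : ℝ)) * (1 - q) * φ)
          ≤ q * μ + (a : ℝ) * φ + (1 - q) * φ) →
      NE2 φ μ q a 0 n2 (n1 - a) := by
    intro a ha0 han1 hA hB hC
    have hcast : ((n1 - a : ℕ) : ℝ) = (n1 : ℝ) - (a : ℝ) := by
      push_cast [Nat.cast_sub han1]; ring
    have haR : (0 : ℝ) ≤ (a : ℝ) := Nat.cast_nonneg a
    refine ⟨?_, ?_, ?_, ?_⟩
    · intro _
      apply frac_le φ μ q _ _ hφ hμ (by positivity) (by positivity)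
      rw [hcast]
      push_cast
      nlinarith [hA]
    · intro hv2
      have hlt : a < n1 := by omega
      apply frac_ge φ μ q _ _ hφ hμ (by positivity) (by positivity)
      rw [hcast]
      push_cast
      nlinarith [hB hlt]
    · intro _
      apply frac_le φ μ q _ _ hφ hμ (by positivity) (by positivity)
      rw [hcast]
      push_cast
      nlinarith [hC]
    · intro h; exact absurd h (by norm_num)
  have part1 : ((n1 : ℝ) * (1 - q) > q * μ / φ + (n2 : ℝ) + (1 - q)) →
      ∃ mt : ℕ, 0 < mt ∧ mt < n1 ∧ t1 - 1 ≤ (mt : ℝ) ∧ (mt : ℝ) ≤ t1 ∧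
        NE2 φ μ q mt 0 n2 (n1 - mt) := by
    intro hbig
    have h2q : 0 < 2 * (1 - q) := by linarith
    have ht1gt1 : 1 < t1 := by
      rw [ht1', lt_div_iff₀ h2q]; nlinarith
    have ht1lt : t1 < (n1 : ℝ) := by
      rw [ht1', div_lt_iff₀ h2q]; nlinarith
    set a := ⌊t1⌋₊ with hadef
    have ha0 : 0 < a := Nat.floor_pos.mpr ht1gt1.le
    have hale : (a : ℝ) ≤ t1 := Nat.floor_le (by linarith)
    have haltn1 : a < n1 := (Nat.floor_lt (by linarith)).mpr ht1lt
    have hage : t1 - 1 ≤ (a : ℝ) := by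
      have := Nat.sub_one_lt_floor t1; linarith
    have haR : (0 : ℝ) ≤ (a : ℝ) := Nat.cast_nonneg a
    -- linear versions
    have hale' : (a : ℝ) * (2 * (1 - q)) ≤ q * μ / φ + (n2 : ℝ) + ((n1 : ℝ) + 1) * (1 - q) := by
      rw [ht1', le_div_iff₀ h2q] at hale; exact hale
    have hage' : q * μ / φ + (n2 : ℝ) + ((n1 : ℝ) - 1) * (1 - q) ≤ (a : ℝ) * (2 * (1 - q)) := by
      rw [ht1'] at hage
      rw [div_sub' (ne_of_gt h2q), div_le_iff₀ h2q] at hage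
      linarith [hage]
    have hA : 2 * (1 - q) * (a : ℝ) * φ ≤ q * μ + (n2 : ℝ) * φ + ((n1 : ℝ) + 1) * (1 - q) * φ := by
      nlinarith [mul_le_mul_of_nonneg_right hale' hφ.le, hcφ]
    have hB : q * μ + (n2 : ℝ) * φ + ((n1 : ℝ) - 1) * (1 - q) * φ ≤ 2 * (1 - q) * (a : ℝ) * φ := by
      nlinarith [mul_le_mul_of_nonneg_right hage' hφ.le, hcφ]
    have hC : (1 - q) * ((n2 : ℝ) * φ + ((n1 : ℝ) - (a : ℝ)) * (1 - q) * φ)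
        ≤ q * μ + (a : ℝ) * φ + (1 - q) * φ := by
      nlinarith [mul_le_mul_of_nonneg_left hB hqb.le,
        mul_nonneg (mul_nonneg hq0.le haR) hφ.le,
        mul_pos hq0 hμ,
        mul_nonneg (mul_nonneg (mul_nonneg hq0.le hqb.le) haR) hφ.le,
        mul_nonneg (mul_nonneg hq0.le hqb.le) hφ.le,
        mul_nonneg (mul_nonneg hq0.le hqb.le) hμ.le]
    exact ⟨a, ha0, haltn1, hage, hale, key a ha0 haltn1.le hA (fun _ => hB) hC⟩
  refine ⟨part1, ?_⟩
  by_cases hbig : (n1 : ℝ) * (1 - q) > q * μ / φ + (n2 : ℝ) + (1 - q)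
  · obtain ⟨mt, h1, h2, _, _, h5⟩ := part1 hbig
    exact ⟨mt, h1, h2.le, h5⟩
  · push_neg at hbig
    refine ⟨n1, hn1, le_rfl, key n1 hn1 le_rfl ?_ (fun h => absurd h (lt_irrefl n1)) ?_⟩
    · nlinarith [mul_le_mul_of_nonneg_right hbig hφ.le, hcφ]
    · nlinarith [mul_nonneg (mul_nonneg hq0.le (le_trans zero_le_one hn2R)) hφ.le,
        mul_le_mul_of_nonneg_right hnR hφ.le, mul_pos hq0 hμ, mul_pos hqb hφ]
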